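/- arXiv:1906.10080 — 2 statements merged into one kernel-verified Lean document; each statement's English description precedes it below -/
import Mathlib

section
/- Let a, b be coprime positive integers and let x, x', y, y' be nonzero complex numbers. If x^a * y^b = x'^a * y'^b, then there exists a complex number s ≠ 0 such that x = s^b * x' and y = s^(-a) * y'. -/
private lemma orbit_aux (U V : ℂˣ) (p q : ℤ) (a b : ℕ)
    (hUV : U ^ (a:ℤ) * V ^ (b:ℤ) = 1) (hpq : (a:ℤ) * p + (b:ℤ) * q = 1) :
    ((U ^ q * V ^ (-p)) ^ (b : ℤ) = U) ∧ ((U ^ q * V ^ (-p)) ^ (-(a:ℤ)) = V) := by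
  have hVb : V ^ (b:ℤ) = (U ^ (a:ℤ))⁻¹ :=
    eq_inv_of_mul_eq_one_left (by rw [mul_comm]; exact hUV)
  have hUa : U ^ (a:ℤ) = (V ^ (b:ℤ))⁻¹ :=
    eq_inv_of_mul_eq_one_right (by rw [mul_comm]; exact hUV)
  constructor
  · simp only [mul_zpow, ← zpow_mul]
    rw [show (-p) * (b:ℤ) = (b:ℤ) * (-p) from mul_comm _ _,
        zpow_mul V (b:ℤ) (-p), hVb, inv_zpow', neg_neg]
    simp only [← zpow_mul]
    rw [← zpow_add]
    conv_rhs => rw [← zpow_one U]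
    congr 1
    linear_combination hpq
  · simp only [mul_zpow, ← zpow_mul]
    rw [show q * -(a:ℤ) = (a:ℤ) * (-q) by ring,
        zpow_mul U (a:ℤ) (-q), hUa, inv_zpow', neg_neg]
    simp only [← zpow_mul]
    rw [← zpow_add]
    conv_rhs => rw [← zpow_one V]
    congr 1
    linear_combination hpq

/-- If `a`, `b` are coprime positive integers and `x, x', y, y'` are nonzero complex
numbers with `x^a * y^b = x'^a * y'^b`, then there exists `s ≠ 0` with
`x = s^b * x'` and `y = s^(-a) * y'`. -/
theorem orbit_equivalence_of_monomial_eq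
    (a b : ℕ) (ha : 0 < a) (hb : 0 < b) (hab : Nat.Coprime a b)
    (x x' y y' : ℂ) (hx : x ≠ 0) (hx' : x' ≠ 0) (hy : y ≠ 0) (hy' : y' ≠ 0)
    (h : x ^ a * y ^ b = x' ^ a * y' ^ b) :
    ∃ s : ℂ, s ≠ 0 ∧ x = s ^ b * x' ∧ y = s ^ (-(a : ℤ)) * y' := by
  obtain ⟨p, q, hpq⟩ : ∃ p q : ℤ, (a : ℤ) * p + (b : ℤ) * q = 1 := by
    refine ⟨Nat.gcdA a b, Nat.gcdB a b, ?_⟩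
    have := Nat.gcd_eq_gcd_ab a b
    rw [hab.gcd_eq_one] at this
    exact_mod_cast this.symm
  set U : ℂˣ := Units.mk0 (x / x') (div_ne_zero hx hx') with hU
  set V : ℂˣ := Units.mk0 (y / y') (div_ne_zero hy hy') with hV
  have hUVc : ((U : ℂ)) ^ a * ((V : ℂ)) ^ b = 1 := by
    simp only [hU, hV, Units.val_mk0]
    field_simp
    have h1 : x'⁻¹ ^ a * x' ^ a = 1 := by rw [← mul_pow, inv_mul_cancel₀ hx', one_pow]
    have h2 : y'⁻¹ ^ b * y' ^ b = 1 := by rw [← mul_pow, inv_mul_cancel₀ hy', one_pow]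
    linear_combination (x'⁻¹ ^ a * y'⁻¹ ^ b) * h + y'⁻¹ ^ b * y' ^ b * h1 + h2
  have hUV : U ^ (a : ℤ) * V ^ (b : ℤ) = 1 := by
    ext
    push_cast
    simpa using hUVc
  obtain ⟨h1, h2⟩ := orbit_aux U V p q a b hUV hpq
  set S : ℂˣ := U ^ q * V ^ (-p) with hS
  refine ⟨(S : ℂ), S.ne_zero, ?_, ?_⟩
  · have hb' : ((S : ℂ)) ^ (b : ℤ) = x / x' := by
      have := congrArg Units.val h1
      rw [Units.val_zpow_eq_zpow_val] at this
      simpa [hU] using this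
    rw [← zpow_natCast, hb']
    field_simp
  · have ha' : ((S : ℂ)) ^ (-(a : ℤ)) = y / y' := by
      have := congrArg Units.val h2
      rw [Units.val_zpow_eq_zpow_val] at this
      simpa [hV] using this
    rw [ha']
    field_simp
end

section
/- Let μ(x,y) = (Σ_{i,j}|x_i y_j|²(b e_i − a e_j))/(Σ_{i,j}|x_i y_j|²) with e_0 = 0. If μ(x,y) lies on the boundary of P = conv{b e_i − a e_j} and Σ_{i=0}^n x_i^α y_i^β = 0 with α = da, β = db, then x_i y_i = 0 for all i = 0, 1, …, n. -/
/-- The vector `e_i` for `i = 0,…,n`, with the convention `e_0 = 0`. -/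
def stdVec (n : ℕ) (i : Fin (n+1)) : Fin n → ℝ := fun k => if (k : ℕ) + 1 = (i : ℕ) then 1 else 0

/-- The vertex `b e_i − a e_j` of the moment polytope. -/
def momVert (n a b : ℕ) (i j : Fin (n+1)) : Fin n → ℝ :=
  (b : ℝ) • stdVec n i - (a : ℝ) • stdVec n j

open Finset

private lemma stdVec_zero (n : ℕ) : stdVec n 0 = 0 := by
  funext k; simp [stdVec]

private lemma stdVec_succ (n : ℕ) (k : Fin n) : stdVec n k.succ = Pi.single k 1 := by
  funext l
  have h : (l : ℕ) + 1 = ((k.succ : Fin (n+1)) : ℕ) ↔ l = k := by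
    rw [Fin.val_succ]
    constructor
    · intro h; exact Fin.ext (Nat.succ_injective h)
    · intro h; rw [h]
  simp [stdVec, h, Pi.single_apply, Fin.ext_iff]

private lemma smul_single_one (n : ℕ) (r : ℝ) (k : Fin n) :
    r • (Pi.single k 1 : Fin n → ℝ) = Pi.single k r := by
  funext l
  by_cases h : l = k <;> simp [Pi.single_apply, h]

private lemma momVert_zero_zero (n a b : ℕ) : momVert n a b 0 0 = 0 := by
  simp [momVert, stdVec_zero]

private lemma momVert_succ_zero (n a b : ℕ) (k : Fin n) :
    momVert n a b k.succ 0 = (b : ℝ) • (Pi.single k 1 : Fin n → ℝ) := by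
  simp [momVert, stdVec_zero, stdVec_succ]

private lemma momVert_zero_succ (n a b : ℕ) (k : Fin n) :
    momVert n a b 0 k.succ = -((a : ℝ) • (Pi.single k 1 : Fin n → ℝ)) := by
  simp [momVert, stdVec_zero, stdVec_succ]

private lemma momVert_self (n a b : ℕ) (i : Fin (n+1)) :
    momVert n a b i i = ((b : ℝ) - a) • stdVec n i := by
  rw [momVert, sub_smul]

private lemma zero_mem_interior (n a b : ℕ) (ha : 0 < a) (hb : 0 < b) :
    (0 : Fin n → ℝ) ∈ interior (convexHull ℝ
      (Set.range fun p : Fin (n+1) × Fin (n+1) => momVert n a b p.1 p.2)) := by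
  classical
  set S := Set.range fun p : Fin (n+1) × Fin (n+1) => momVert n a b p.1 p.2 with hS
  have ha' : (0:ℝ) < a := by exact_mod_cast ha
  have hb' : (0:ℝ) < b := by exact_mod_cast hb
  have ha1 : (1:ℝ) ≤ a := by exact_mod_cast ha
  have hb1 : (1:ℝ) ≤ b := by exact_mod_cast hb
  set ε : ℝ := (1 + n * (a + b) : ℝ)⁻¹ with hε
  have hden : (0:ℝ) < 1 + n * (a + b) := by positivity
  have hεpos : 0 < ε := by positivity
  have hmul : (1 + (n:ℝ) * (a + b)) * ε = 1 := mul_inv_cancel₀ hden.ne'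
  rw [mem_interior]
  refine ⟨Metric.ball 0 ε, ?_, Metric.isOpen_ball, Metric.mem_ball_self hεpos⟩
  intro δ hδ
  have hδε : ∀ k : Fin n, |δ k| ≤ ε := by
    intro k
    have h2 : ‖δ‖ < ε := by simpa using (mem_ball_zero_iff.mp hδ)
    exact le_of_lt (lt_of_le_of_lt (norm_le_pi_norm δ k) h2)
  set wp : Fin n → ℝ := fun k => max (δ k) 0 / b with hwp
  set wm : Fin n → ℝ := fun k => max (-(δ k)) 0 / a with hwm
  set Ssum : ℝ := ∑ k, (wp k + wm k) with hSsum
  have hwpnn : ∀ k, 0 ≤ wp k := fun k => div_nonneg (le_max_right _ _) hb'.le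
  have hwmnn : ∀ k, 0 ≤ wm k := fun k => div_nonneg (le_max_right _ _) ha'.le
  have hterm : ∀ k, wp k + wm k ≤ ((a:ℝ) + b) * ε := by
    intro k
    have h1 : max (δ k) 0 ≤ ε := le_trans (max_le (le_abs_self _) (abs_nonneg _)) (hδε k)
    have h2 : max (-(δ k)) 0 ≤ ε := le_trans (max_le (neg_le_abs _) (abs_nonneg _)) (hδε k)
    have e1 : wp k ≤ ε := le_trans (div_le_self (le_max_right _ _) hb1) h1
    have e2 : wm k ≤ ε := le_trans (div_le_self (le_max_right _ _) ha1) h2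
    nlinarith [hεpos.le]
  have hSle : Ssum ≤ (n:ℝ) * ((a:ℝ) + b) * ε := by
    calc Ssum ≤ ∑ _k : Fin n, ((a:ℝ) + b) * ε :=
          Finset.sum_le_sum (fun k _ => hterm k)
      _ = (n:ℝ) * (((a:ℝ) + b) * ε) := by simp [mul_comm]
      _ = (n:ℝ) * ((a:ℝ) + b) * ε := by ring
  have hS1 : Ssum ≤ 1 - ε := by nlinarith
  have hSnn : 0 ≤ Ssum := Finset.sum_nonneg fun k _ => add_nonneg (hwpnn k) (hwmnn k)
  -- express δ as a convex combination of vertices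
  set w : (Fin n ⊕ Fin n) ⊕ Unit → ℝ :=
    Sum.elim (Sum.elim wp wm) (fun _ => 1 - Ssum) with hw
  set z : (Fin n ⊕ Fin n) ⊕ Unit → (Fin n → ℝ) :=
    Sum.elim (Sum.elim (fun k => momVert n a b k.succ 0) (fun k => momVert n a b 0 k.succ))
      (fun _ => momVert n a b 0 0) with hz
  have hwnn : ∀ i2, 0 ≤ w i2 := by
    rintro ((k | k) | u)
    · simpa [hw] using hwpnn k
    · simpa [hw] using hwmnn k
    · simp only [hw, Sum.elim_inr]; linarith
  have hwsum : ∑ i2, w i2 = 1 := by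
    rw [Fintype.sum_sum_type, Fintype.sum_sum_type]
    simp only [hw, Sum.elim_inl, Sum.elim_inr]
    have : Ssum = ∑ k, wp k + ∑ k, wm k := by
      rw [hSsum, Finset.sum_add_distrib]
    simp [this]
  have hzmem : ∀ i2, z i2 ∈ S := by
    rintro ((k | k) | u)
    · exact ⟨(k.succ, 0), rfl⟩
    · exact ⟨(0, k.succ), rfl⟩
    · exact ⟨(0, 0), rfl⟩
  have key : ∑ i2, w i2 • z i2 = δ := by
    rw [Fintype.sum_sum_type, Fintype.sum_sum_type]
    simp only [hw, hz, Sum.elim_inl, Sum.elim_inr]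
    have e1 : ∀ k : Fin n, wp k • momVert n a b k.succ 0 = Pi.single k (max (δ k) 0) := by
      intro k
      rw [momVert_succ_zero, smul_smul, hwp, div_mul_cancel₀ _ hb'.ne', smul_single_one]
    have e2 : ∀ k : Fin n,
        wm k • momVert n a b 0 k.succ = Pi.single k (-(max (-(δ k)) 0)) := by
      intro k
      rw [momVert_zero_succ, smul_neg, smul_smul, hwm, div_mul_cancel₀ _ ha'.ne',
        smul_single_one, ← Pi.single_neg]
    simp only [e1, e2, momVert_zero_zero, smul_zero]
    rw [Finset.sum_const, ← Finset.sum_add_distrib]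
    have e3 : ∀ k : Fin n,
        (Pi.single k (max (δ k) 0) + Pi.single k (-(max (-(δ k)) 0)) : Fin n → ℝ)
          = Pi.single k (δ k) := by
      intro k
      rw [← Pi.single_add]
      congr 1
      have := max_zero_sub_max_neg_zero_eq_self (δ k)
      simpa [sub_eq_add_neg] using this
    simp only [e3]
    simp [Finset.univ_sum_single]
  rw [← key]
  exact (convex_convexHull ℝ S).sum_mem (fun i2 _ => hwnn i2) hwsum
    (fun i2 _ => subset_convexHull ℝ S (hzmem i2))

private lemma vert_self_mem_interior (n a b : ℕ) (ha : 0 < a) (hb : 0 < b) (i : Fin (n+1)) :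
    momVert n a b i i ∈ interior (convexHull ℝ
      (Set.range fun p : Fin (n+1) × Fin (n+1) => momVert n a b p.1 p.2)) := by
  set S := Set.range fun p : Fin (n+1) × Fin (n+1) => momVert n a b p.1 p.2 with hS
  have hconv : Convex ℝ (convexHull ℝ S) := convex_convexHull ℝ S
  have hclosed : IsClosed (convexHull ℝ S) := (Set.finite_range _).isClosed_convexHull (𝕜 := ℝ)
  have h0 := zero_mem_interior n a b ha hb
  have ha' : (0:ℝ) < a := by exact_mod_cast ha
  have hb' : (0:ℝ) < b := by exact_mod_cast hb
  rcases le_total (a:ℝ) (b:ℝ) with hle | hle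
  · set t : ℝ := ((b:ℝ) - a) / b with ht
    have htnn : 0 ≤ t := div_nonneg (by linarith) hb'.le
    have ht1 : t < 1 := by
      rw [ht, div_lt_one hb']; linarith
    have heqv : momVert n a b i i = (1 - t) • (0 : Fin n → ℝ) + t • momVert n a b i 0 := by
      rw [momVert_self, smul_zero, zero_add, momVert, stdVec_zero, smul_zero, sub_zero,
        smul_smul, ht, div_mul_cancel₀ _ hb'.ne']
    rw [heqv]
    have hmem : momVert n a b i 0 ∈ closure (convexHull ℝ S) := by
      rw [hclosed.closure_eq]
      exact subset_convexHull ℝ S ⟨(i, 0), rfl⟩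
    exact hconv.combo_interior_closure_mem_interior h0 hmem (by linarith) htnn (by ring)
  · set t : ℝ := ((a:ℝ) - b) / a with ht
    have htnn : 0 ≤ t := div_nonneg (by linarith) ha'.le
    have ht1 : t < 1 := by
      rw [ht, div_lt_one ha']; linarith
    have heqv : momVert n a b i i = (1 - t) • (0 : Fin n → ℝ) + t • momVert n a b 0 i := by
      rw [momVert_self, smul_zero, zero_add, momVert, stdVec_zero, smul_zero, zero_sub,
        smul_neg, smul_smul, ht, div_mul_cancel₀ _ ha'.ne', ← neg_smul]
      ring_nf
    rw [heqv]
    have hmem : momVert n a b 0 i ∈ closure (convexHull ℝ S) := by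
      rw [hclosed.closure_eq]
      exact subset_convexHull ℝ S ⟨(0, i), rfl⟩
    exact hconv.combo_interior_closure_mem_interior h0 hmem (by linarith) htnn (by ring)

set_option maxHeartbeats 1000000 in
/-- If the moment map value of `([x],[y])` lies on the boundary of the polytope
`P = conv{b eᵢ − a eⱼ}` and `Σ xᵢ^α yᵢ^β = 0` with `α = d·a`, `β = d·b`, then
`xᵢ yᵢ = 0` for all `i`. -/
theorem boundary_fibre_vanishing (n a b d : ℕ) (hn : 2 ≤ n)
    (ha : 0 < a) (hb : 0 < b) (hd : 0 < d) (hab : Nat.Coprime a b)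
    (x y : Fin (n+1) → ℂ) (hx : x ≠ 0) (hy : y ≠ 0)
    (hbd : (∑ i, ∑ j, ‖x i * y j‖ ^ 2)⁻¹ •
        (∑ i, ∑ j, (‖x i * y j‖ ^ 2) • momVert n a b i j)
      ∈ frontier (convexHull ℝ
        (Set.range fun p : Fin (n+1) × Fin (n+1) => momVert n a b p.1 p.2)))
    (heq : ∑ i, x i ^ (d * a) * y i ^ (d * b) = 0) :
    ∀ i, x i * y i = 0 := by
  classical
  intro i
  by_contra hxy
  set S := Set.range fun p : Fin (n+1) × Fin (n+1) => momVert n a b p.1 p.2 with hS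
  have hconv : Convex ℝ (convexHull ℝ S) := convex_convexHull ℝ S
  have hclosed : IsClosed (convexHull ℝ S) := (Set.finite_range _).isClosed_convexHull (𝕜 := ℝ)
  set w : Fin (n+1) × Fin (n+1) → ℝ := fun p => ‖x p.1 * y p.2‖ ^ 2 with hw
  set v : Fin (n+1) × Fin (n+1) → (Fin n → ℝ) := fun p => momVert n a b p.1 p.2 with hv
  have hwnn : ∀ p, 0 ≤ w p := fun p => by positivity
  have hwii : 0 < w (i, i) := by
    have h1 : x i * y i ≠ 0 := hxy
    have : 0 < ‖x i * y i‖ := norm_pos_iff.mpr h1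
    positivity
  set c : ℝ := ∑ p : Fin (n+1) × Fin (n+1), w p with hc
  have hcpos : 0 < c :=
    Finset.sum_pos' (fun p _ => hwnn p) ⟨(i, i), Finset.mem_univ _, hwii⟩
  -- rewrite the double sums
  have hsum1 : (∑ i, ∑ j, ‖x i * y j‖ ^ 2) = c := by
    rw [hc, Fintype.sum_prod_type]
  have hsum2 : (∑ i, ∑ j, (‖x i * y j‖ ^ 2) • momVert n a b i j)
      = ∑ p : Fin (n+1) × Fin (n+1), w p • v p := by
    rw [Fintype.sum_prod_type]
  rw [hsum1, hsum2] at hbd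
  set t0 : Finset (Fin (n+1) × Fin (n+1)) := Finset.univ.erase (i, i) with ht0
  set s : ℝ := ∑ p ∈ t0, w p with hs
  have hsnn : 0 ≤ s := Finset.sum_nonneg fun p _ => hwnn p
  have hcs : w (i, i) + s = c :=
    Finset.add_sum_erase Finset.univ w (Finset.mem_univ (i, i))
  have hsplit : ∑ p : Fin (n+1) × Fin (n+1), w p • v p
      = w (i, i) • v (i, i) + ∑ p ∈ t0, w p • v p :=
    (Finset.add_sum_erase Finset.univ (fun p => w p • v p) (Finset.mem_univ (i, i))).symm
  have hint : c⁻¹ • ∑ p : Fin (n+1) × Fin (n+1), w p • v p ∈ interior (convexHull ℝ S) := by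
    rcases eq_or_lt_of_le hsnn with hs0 | hspos
    · -- all off-diagonal weights vanish
      have hzero : ∀ p ∈ t0, w p = 0 := by
        intro p hp
        exact (Finset.sum_eq_zero_iff_of_nonneg (fun q _ => hwnn q)).mp hs0.symm p hp
      have hR : ∑ p ∈ t0, w p • v p = 0 :=
        Finset.sum_eq_zero fun p hp => by rw [hzero p hp, zero_smul]
      have hcw : c = w (i, i) := by rw [← hcs, ← hs0]; ring
      rw [hsplit, hR, add_zero, smul_smul, hcw, inv_mul_cancel₀ hwii.ne', one_smul]
      exact vert_self_mem_interior n a b ha hb i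
    · set zc : Fin n → ℝ := t0.centerMass w v with hzc
      have hzmem : zc ∈ convexHull ℝ S :=
        Finset.centerMass_mem_convexHull t0 (fun p _ => hwnn p) hspos
          (fun p _ => ⟨p, rfl⟩)
      have hR : ∑ p ∈ t0, w p • v p = s • zc := by
        rw [hzc, Finset.centerMass, ← hs, smul_smul, mul_inv_cancel₀ hspos.ne', one_smul]
      rw [hsplit, hR, smul_add, smul_smul, smul_smul]
      have hcoef : c⁻¹ * w (i, i) + c⁻¹ * s = 1 := by
        rw [← mul_add, hcs, inv_mul_cancel₀ hcpos.ne']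
      exact hconv.combo_interior_closure_mem_interior
        (vert_self_mem_interior n a b ha hb i)
        (by rw [hclosed.closure_eq]; exact hzmem)
        (mul_pos (inv_pos.mpr hcpos) hwii) (mul_nonneg (inv_nonneg.mpr hcpos.le) hsnn) hcoef
  exact hbd.2 hint
end
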